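/- Let k be a field of characteristic zero and F ∈ k((t)) a Laurent series with ν(F) = -1 (i.e. F = c t^{-1} + higher order terms with c ≠ 0) such that F ≠ c t^{-1}. Then the generating series Σ_{l ≥ 1} [F^l]₀ t^l of constant terms of powers of F is not identically zero, i.e. there exists l ≥ 1 with [F^l]₀ ≠ 0. -/

import Mathlib

open HahnSeries

private lemma coeff_single_mul {k : Type*} [Field k] (a : ℤ) (r : k) (x : LaurentSeries k)
    (g : ℤ) : (HahnSeries.single a r * x).coeff g = r * x.coeff (g - a) := by
  have h := HahnSeries.coeff_single_mul_add (r := r) (x := x) (a := g - a) (b := a)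
  rwa [sub_add_cancel] at h

/-- Let `k` be a field of characteristic zero and `F ∈ k((t))` with `ν(F) = -1`
(the coefficient of `t⁻¹` is nonzero and all lower coefficients vanish) and
`F ≠ c·t⁻¹`. Then some power `Fˡ`, `l ≥ 1`, has nonzero constant term, i.e. the
generating series `Σ_{l≥1} [Fˡ]₀ tˡ` is nonzero. -/
theorem generating_series_of_constant_terms_ne_zero {k : Type*} [Field k] [CharZero k]
    (F : LaurentSeries k) (hlead : F.coeff (-1) ≠ 0)
    (hlow : ∀ l : ℤ, l < -1 → F.coeff l = 0)
    (hne : F ≠ HahnSeries.single (-1) (F.coeff (-1))) :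
    ∃ l : ℕ, 1 ≤ l ∧ (F ^ l).coeff 0 ≠ 0 := by
  classical
  set c := F.coeff (-1) with hc
  set B := F - HahnSeries.single (-1) c with hBdef
  have hBne : B ≠ 0 := sub_ne_zero.mpr hne
  have hBlow : ∀ l : ℤ, l < 0 → B.coeff l = 0 := by
    intro l hl
    rcases eq_or_ne l (-1) with rfl | h
    · simp [hBdef, hc]
    · simp [hBdef, coeff_single_of_ne h, hlow l (by omega)]
  have hm0 : (0 : ℤ) ≤ B.order := by
    by_contra h
    exact (mt coeff_order_eq_zero.mp hBne) (hBlow _ (not_le.mp h))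
  obtain ⟨n, hn⟩ : ∃ n : ℕ, (n : ℤ) = B.order := ⟨B.order.toNat, Int.toNat_of_nonneg hm0⟩
  refine ⟨n + 1, le_add_self, ?_⟩
  have hF : F = HahnSeries.single (-1) c + B := by rw [hBdef]; ring
  rw [hF, add_pow]
  rw [show ((Finset.range (n + 1 + 1)).sum fun i =>
      HahnSeries.single (-1 : ℤ) c ^ i * B ^ (n + 1 - i) * (Nat.choose (n+1) i : LaurentSeries k)).coeff 0
      = (Finset.range (n + 1 + 1)).sum fun i =>
      (HahnSeries.single (-1 : ℤ) c ^ i * B ^ (n + 1 - i) * (Nat.choose (n+1) i : LaurentSeries k)).coeff 0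
    from map_sum (HahnSeries.coeff.addMonoidHom (0 : ℤ)) _ _]
  have hterm : ∀ i : ℕ,
      (HahnSeries.single (-1 : ℤ) c ^ i * B ^ (n + 1 - i) * (Nat.choose (n+1) i : LaurentSeries k)).coeff 0
      = ((Nat.choose (n+1) i : k)) * (c ^ i * (B ^ (n + 1 - i)).coeff i) := by
    intro i
    have hcast : ((Nat.choose (n+1) i : LaurentSeries k))
        = HahnSeries.single (0 : ℤ) ((Nat.choose (n+1) i : k)) := by
      rw [← HahnSeries.C_apply]
      exact (map_natCast (HahnSeries.C : k →+* LaurentSeries k) _).symm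
    rw [hcast, HahnSeries.single_pow, mul_comm, ← mul_assoc, HahnSeries.single_mul_single,
      zero_add, _root_.coeff_single_mul]
    have h0 : (0 : ℤ) - i • (-1 : ℤ) = i := by simp
    rw [h0]
    ring
  rw [Finset.sum_eq_single n]
  · rw [hterm, show n + 1 - n = 1 from by omega, pow_one, Nat.choose_succ_self_right, hn]
    exact mul_ne_zero (Nat.cast_ne_zero.mpr (Nat.succ_ne_zero n))
      (mul_ne_zero (pow_ne_zero _ hlead) (mt coeff_order_eq_zero.mp hBne))
  · intro i hi hine
    rw [hterm]
    rcases eq_or_ne i (n+1) with rfl | h2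
    · rw [show n + 1 - (n+1) = 0 from by omega, pow_zero]
      norm_num [HahnSeries.coeff_one]
      exact fun h => absurd h (by omega)
    · have hilt : i < n := by
        have := Finset.mem_range.mp hi; omega
      have hkey : (i : ℤ) < (B ^ (n + 1 - i)).order := by
        rw [HahnSeries.order_pow, ← hn, nsmul_eq_mul]
        have h3 : i < (n + 1 - i) * n := by
          have h4 : 2 ≤ n + 1 - i := by omega
          calc i < 2 * n := by omega
            _ ≤ (n + 1 - i) * n := Nat.mul_le_mul_right n h4
        exact_mod_cast h3
      rw [HahnSeries.coeff_eq_zero_of_lt_order hkey]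
      ring
  · exact fun h => absurd (Finset.mem_range.mpr (by omega)) h
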